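/- For every positive integer n, the average first moment P_n(t) of the truncated cube is a strictly increasing function of t on (0, n); in particular, for every α ∈ (0, 1/2) the equation P_n(t) = α has a unique solution t ∈ (0, n). -/

import Mathlib

open MeasureTheory

open Set

/-- The truncated cube `𝒯_n(t) = {x ∈ [0,1]^n : ∑ i, x i ≤ t}`. -/
def truncCube (n : ℕ) (t : ℝ) : Set (Fin n → ℝ) :=
  {x | (∀ i, x i ∈ Set.Icc (0 : ℝ) 1) ∧ ∑ i, x i ≤ t}

lemma continuous_sumFn (n : ℕ) : Continuous (fun x : Fin n → ℝ => ∑ i, x i) :=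
  continuous_finset_sum _ fun i _ => continuous_apply i

lemma isCompact_truncCube (n : ℕ) (t : ℝ) : IsCompact (truncCube n t) := by
  have h1 : truncCube n t = (Set.pi Set.univ fun _ : Fin n => Set.Icc (0:ℝ) 1) ∩
      {x | ∑ i, x i ≤ t} := by
    ext x; simp only [truncCube, Set.mem_setOf_eq, Set.mem_inter_iff, Set.mem_univ_pi]
  rw [h1]
  exact (isCompact_univ_pi fun _ => isCompact_Icc).inter_right
    (isClosed_le (continuous_sumFn n) continuous_const)

lemma measurableSet_truncCube (n : ℕ) (t : ℝ) : MeasurableSet (truncCube n t) :=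
  (isCompact_truncCube n t).isClosed.measurableSet

lemma truncCube_mono (n : ℕ) {s t : ℝ} (h : s ≤ t) : truncCube n s ⊆ truncCube n t :=
  fun x hx => ⟨hx.1, hx.2.trans h⟩

lemma volume_cube (n : ℕ) : volume (Set.pi Set.univ fun _ : Fin n => Set.Icc (0:ℝ) 1) = 1 := by
  rw [volume_pi_pi]
  simp [Real.volume_Icc]

lemma truncCube_subset_cube (n : ℕ) (t : ℝ) :
    truncCube n t ⊆ Set.pi Set.univ fun _ : Fin n => Set.Icc (0:ℝ) 1 := by
  intro x hx; rw [Set.mem_univ_pi]; exact hx.1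

lemma volume_truncCube_ne_top (n : ℕ) (t : ℝ) : volume (truncCube n t) ≠ ⊤ := by
  refine ne_top_of_le_ne_top ?_ (measure_mono (truncCube_subset_cube n t))
  rw [volume_cube]; exact ENNReal.one_ne_top

lemma truncCube_at_n (n : ℕ) : truncCube n n = Set.pi Set.univ fun _ : Fin n => Set.Icc (0:ℝ) 1 := by
  ext x
  simp only [truncCube, Set.mem_setOf_eq, Set.mem_univ_pi]
  constructor
  · exact fun h i => h.1 i
  · intro h
    refine ⟨h, ?_⟩
    calc ∑ i, x i ≤ ∑ _i : Fin n, (1:ℝ) := Finset.sum_le_sum fun i _ => (h i).2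
    _ = n := by simp

lemma slab_le (m : ℕ) (a b : ℝ) :
    volume {x : Fin (m+1) → ℝ | (∀ i, x i ∈ Set.Icc (0:ℝ) 1) ∧ a < ∑ i, x i ∧ ∑ i, x i ≤ b} ≤
      ENNReal.ofReal (b - a) := by
  set T : Set (ℝ × (Fin m → ℝ)) :=
    {p | (∀ i, p.2 i ∈ Set.Icc (0:ℝ) 1) ∧
      p.1 ∈ Set.Ioc (a - ∑ i, p.2 i) (b - ∑ i, p.2 i)} with hTdef
  have hsum : Measurable fun y : Fin m → ℝ => ∑ i, y i :=
    Finset.measurable_sum _ fun i _ => measurable_pi_apply i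
  have hcube : MeasurableSet {y : Fin m → ℝ | ∀ i, y i ∈ Set.Icc (0:ℝ) 1} := by
    have : {y : Fin m → ℝ | ∀ i, y i ∈ Set.Icc (0:ℝ) 1} =
        Set.pi Set.univ fun _ => Set.Icc (0:ℝ) 1 := by
      ext y; simp only [Set.mem_setOf_eq, Set.mem_univ_pi]
    rw [this]; exact MeasurableSet.univ_pi fun _ => measurableSet_Icc
  have hTm : MeasurableSet T := by
    apply MeasurableSet.inter
    · exact measurable_snd hcube
    · apply MeasurableSet.inter
      · exact measurableSet_lt (measurable_const.sub (hsum.comp measurable_snd)) measurable_fst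
      · exact measurableSet_le measurable_fst (measurable_const.sub (hsum.comp measurable_snd))
  set e := MeasurableEquiv.piFinSuccAbove (fun _ : Fin (m+1) => ℝ) 0 with hedef
  have hmp : MeasurePreserving e :=
    volume_preserving_piFinSuccAbove (fun _ : Fin (m+1) => ℝ) 0
  have hsub : {x : Fin (m+1) → ℝ | (∀ i, x i ∈ Set.Icc (0:ℝ) 1) ∧
      a < ∑ i, x i ∧ ∑ i, x i ≤ b} ⊆ e ⁻¹' T := by
    intro x hx
    have he : e x = (x 0, fun j => x (Fin.succAbove 0 j)) := rfl
    have hsumeq : ∑ i, x i = x 0 + ∑ j : Fin m, x (Fin.succAbove 0 j) := by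
      rw [Fin.succAbove_zero, Fin.sum_univ_succ]
    refine ⟨fun i => hx.1 _, ?_, ?_⟩
    · simp only [he]
      have := hx.2.1
      rw [hsumeq] at this; linarith
    · simp only [he]
      have := hx.2.2
      rw [hsumeq] at this; linarith
  calc volume {x : Fin (m+1) → ℝ | (∀ i, x i ∈ Set.Icc (0:ℝ) 1) ∧
      a < ∑ i, x i ∧ ∑ i, x i ≤ b}
      ≤ volume (e ⁻¹' T) := measure_mono hsub
    _ = volume T := hmp.measure_preimage hTm.nullMeasurableSet
    _ ≤ ENNReal.ofReal (b - a) := by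
        rw [Measure.volume_eq_prod, Measure.prod_apply_symm hTm]
        have hbd : ∀ y : Fin m → ℝ, volume ((fun x => (x, y)) ⁻¹' T) ≤
            Set.indicator {y : Fin m → ℝ | ∀ i, y i ∈ Set.Icc (0:ℝ) 1}
              (fun _ => ENNReal.ofReal (b - a)) y := by
          intro y
          by_cases hy : ∀ i, y i ∈ Set.Icc (0:ℝ) 1
          · rw [Set.indicator_of_mem (show y ∈ {y : Fin m → ℝ | ∀ i, y i ∈ Set.Icc (0:ℝ) 1} from hy)]
            have : (fun x => (x, y)) ⁻¹' T ⊆ Set.Ioc (a - ∑ i, y i) (b - ∑ i, y i) :=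
              fun x hx => hx.2
            calc volume ((fun x => (x, y)) ⁻¹' T) ≤
                volume (Set.Ioc (a - ∑ i, y i) (b - ∑ i, y i)) := measure_mono this
              _ = ENNReal.ofReal (b - a) := by rw [Real.volume_Ioc]; congr 1; ring
          · rw [Set.indicator_of_notMem (show y ∉ {y : Fin m → ℝ | ∀ i, y i ∈ Set.Icc (0:ℝ) 1} from hy)]
            have : (fun x => (x, y)) ⁻¹' T = ∅ := by
              ext x; simp only [Set.mem_preimage, Set.mem_empty_iff_false, iff_false]
              intro hx; exact hy hx.1
            rw [this, measure_empty]
        calc ∫⁻ y, volume ((fun x => (x, y)) ⁻¹' T) ≤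
            ∫⁻ y, Set.indicator {y : Fin m → ℝ | ∀ i, y i ∈ Set.Icc (0:ℝ) 1}
              (fun _ => ENNReal.ofReal (b - a)) y := lintegral_mono hbd
          _ = ENNReal.ofReal (b - a) := by
              rw [lintegral_indicator hcube]
              simp only [setLIntegral_const]
              have : volume {y : Fin m → ℝ | ∀ i, y i ∈ Set.Icc (0:ℝ) 1} = 1 := by
                have h2 : {y : Fin m → ℝ | ∀ i, y i ∈ Set.Icc (0:ℝ) 1} =
                    Set.pi Set.univ fun _ => Set.Icc (0:ℝ) 1 := by
                  ext y; simp only [Set.mem_setOf_eq, Set.mem_univ_pi]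
                rw [h2, volume_pi_pi]; simp [Real.volume_Icc]
              rw [this, mul_one]

/-- Volume of the truncated cube. -/
noncomputable def truncVol (n : ℕ) (t : ℝ) : ℝ :=
  (volume (truncCube n t)).toReal

noncomputable def Ifun (n : ℕ) (t : ℝ) : ℝ := ∫ x in truncCube n t, ∑ i, x i

lemma integrableOn_sum (n : ℕ) (t : ℝ) :
    IntegrableOn (fun x : Fin n → ℝ => ∑ i, x i) (truncCube n t) :=
  (continuous_sumFn n).continuousOn.integrableOn_compact (isCompact_truncCube n t)

lemma truncVol_nonneg (n : ℕ) (t : ℝ) : 0 ≤ truncVol n t := ENNReal.toReal_nonneg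

lemma truncVol_mono (n : ℕ) : Monotone (truncVol n) := fun a b h =>
  ENNReal.toReal_mono (volume_truncCube_ne_top n b) (measure_mono (truncCube_mono n h))

lemma vol_diff (n : ℕ) {a b : ℝ} (h : a ≤ b) :
    (volume (truncCube n b \ truncCube n a)).toReal = truncVol n b - truncVol n a := by
  rw [measure_diff (truncCube_mono n h) (measurableSet_truncCube n a).nullMeasurableSet
    (volume_truncCube_ne_top n a)]
  rw [ENNReal.toReal_sub_of_le (measure_mono (truncCube_mono n h)) (volume_truncCube_ne_top n b)]
  rfl

lemma truncVol_lip (m : ℕ) {a b : ℝ} (h : a ≤ b) :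
    truncVol (m+1) b ≤ truncVol (m+1) a + (b - a) := by
  have hsub : truncCube (m+1) b ⊆ truncCube (m+1) a ∪
      {x : Fin (m+1) → ℝ | (∀ i, x i ∈ Set.Icc (0:ℝ) 1) ∧ a < ∑ i, x i ∧ ∑ i, x i ≤ b} := by
    intro x hx
    by_cases hs : ∑ i, x i ≤ a
    · exact Or.inl ⟨hx.1, hs⟩
    · exact Or.inr ⟨hx.1, lt_of_not_ge hs, hx.2⟩
  have h1 : volume (truncCube (m+1) b) ≤ volume (truncCube (m+1) a) + ENNReal.ofReal (b - a) :=
    le_trans (measure_mono hsub) (le_trans (measure_union_le _ _)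
      (add_le_add le_rfl (slab_le m a b)))
  have h2 := ENNReal.toReal_mono
    (ENNReal.add_ne_top.2 ⟨volume_truncCube_ne_top (m+1) a, ENNReal.ofReal_ne_top⟩) h1
  rwa [ENNReal.toReal_add (volume_truncCube_ne_top (m+1) a) ENNReal.ofReal_ne_top,
    ENNReal.toReal_ofReal (by linarith)] at h2

lemma continuous_truncVol (m : ℕ) : Continuous (truncVol (m+1)) := by
  have key : ∀ a b : ℝ, a ≤ b → |truncVol (m+1) a - truncVol (m+1) b| ≤ (1:ℝ) * |a - b| := by
    intro a b h
    have h1 := truncVol_lip m h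
    have h2 := truncVol_mono (m+1) h
    rw [abs_of_nonpos (by linarith), abs_of_nonpos (by linarith), one_mul]
    linarith
  refine LipschitzWith.continuous (K := 1) (LipschitzWith.of_dist_le_mul fun a b => ?_)
  rw [Real.dist_eq, Real.dist_eq]
  rcases le_total a b with h | h
  · exact key a b h
  · rw [abs_sub_comm, abs_sub_comm a b]; exact key b a h

lemma Ifun_sub_eq (n : ℕ) {a b : ℝ} (h : a ≤ b) :
    Ifun n b - Ifun n a = ∫ x in truncCube n b \ truncCube n a, ∑ i, x i :=
  (integral_diff (measurableSet_truncCube n a) (integrableOn_sum n b)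
    (truncCube_mono n h)).symm

lemma mem_diff_facts (n : ℕ) {a b : ℝ} {x : Fin n → ℝ}
    (hx : x ∈ truncCube n b \ truncCube n a) :
    (0:ℝ) ≤ ∑ i, x i ∧ a < ∑ i, x i ∧ ∑ i, x i ≤ n := by
  obtain ⟨⟨hc, hsb⟩, hna⟩ := hx
  refine ⟨Finset.sum_nonneg fun i _ => (hc i).1, ?_, ?_⟩
  · by_contra hlt
    exact hna ⟨hc, le_of_not_gt hlt⟩
  · calc ∑ i, x i ≤ ∑ _i : Fin n, (1:ℝ) := Finset.sum_le_sum fun i _ => (hc i).2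
    _ = n := by simp

lemma Ifun_sub_lower (n : ℕ) {a b : ℝ} (h : a ≤ b) :
    a * (truncVol n b - truncVol n a) ≤ Ifun n b - Ifun n a := by
  rw [Ifun_sub_eq n h, ← vol_diff n h]
  exact setIntegral_ge_of_const_le_real
    ((measurableSet_truncCube n b).diff (measurableSet_truncCube n a))
    (ne_top_of_le_ne_top (volume_truncCube_ne_top n b) (measure_mono Set.diff_subset))
    (fun x hx => le_of_lt (mem_diff_facts n hx).2.1)
    ((integrableOn_sum n b).mono_set Set.diff_subset)

lemma Ifun_sub_nonneg (n : ℕ) {a b : ℝ} (h : a ≤ b) : 0 ≤ Ifun n b - Ifun n a := by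
  rw [Ifun_sub_eq n h]
  exact setIntegral_nonneg
    ((measurableSet_truncCube n b).diff (measurableSet_truncCube n a))
    (fun x hx => (mem_diff_facts n hx).1)

lemma Ifun_sub_upper (n : ℕ) {a b : ℝ} (h : a ≤ b) :
    Ifun n b - Ifun n a ≤ n * (truncVol n b - truncVol n a) := by
  rw [Ifun_sub_eq n h, ← vol_diff n h]
  have hm : MeasurableSet (truncCube n b \ truncCube n a) :=
    (measurableSet_truncCube n b).diff (measurableSet_truncCube n a)
  have hfin : volume (truncCube n b \ truncCube n a) ≠ ⊤ :=
    ne_top_of_le_ne_top (volume_truncCube_ne_top n b) (measure_mono Set.diff_subset)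
  calc ∫ x in truncCube n b \ truncCube n a, ∑ i, x i
      ≤ ∫ _x in truncCube n b \ truncCube n a, (n:ℝ) := by
        refine setIntegral_mono_on ((integrableOn_sum n b).mono_set Set.diff_subset)
          (integrableOn_const hfin) hm
          (fun x hx => (mem_diff_facts n hx).2.2)
    _ = (volume (truncCube n b \ truncCube n a)).toReal * n := by
        rw [setIntegral_const]; rw [smul_eq_mul]; rfl
    _ = n * (volume (truncCube n b \ truncCube n a)).toReal := mul_comm _ _

lemma continuous_Ifun (m : ℕ) : Continuous (Ifun (m+1)) := by
  have key : ∀ a b : ℝ, a ≤ b → |Ifun (m+1) a - Ifun (m+1) b| ≤ ((m:ℝ)+1) * |a - b| := by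
    intro a b h
    have h1 := Ifun_sub_nonneg (m+1) h
    have h2 := Ifun_sub_upper (m+1) h
    have h3 := truncVol_lip m h
    have h5 := truncVol_mono (m+1) h
    have h4 : (0:ℝ) ≤ (m:ℝ)+1 := by positivity
    rw [abs_of_nonpos (by linarith), abs_of_nonpos (by linarith)]
    push_cast at h2
    nlinarith
  refine LipschitzWith.continuous (K := ⟨(m:ℝ)+1, by positivity⟩)
    (LipschitzWith.of_dist_le_mul fun a b => ?_)
  rw [Real.dist_eq, Real.dist_eq]
  rcases le_total a b with h | h
  · exact key a b h
  · rw [abs_sub_comm, abs_sub_comm a b]; exact key b a h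

lemma diff_pos (n : ℕ) (hn : 0 < n) {a b : ℝ} (ha : 0 ≤ a) (hab : a < b) (hb : b ≤ n) :
    0 < volume (truncCube n b \ truncCube n a) := by
  have hn' : (0:ℝ) < n := by exact_mod_cast hn
  set s : ℝ := (a + min b n) / 2 with hs
  have hmin : a < min b n := lt_min hab (lt_of_lt_of_le hab hb)
  have hs1 : a < s := by rw [hs]; linarith
  have hs2 : s < min b n := by rw [hs]; linarith
  have hs3 : 0 < s := lt_of_le_of_lt ha hs1
  have hs4 : s < n := lt_of_lt_of_le hs2 (min_le_right _ _)
  have hs5 : s < b := lt_of_lt_of_le hs2 (min_le_left _ _)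
  set U : Set (Fin n → ℝ) := (Set.pi Set.univ fun _ : Fin n => Set.Ioo (0:ℝ) 1) ∩
      {x | a < ∑ i, x i} ∩ {x | ∑ i, x i < b} with hU
  have hUopen : IsOpen U :=
    (((isOpen_set_pi Set.finite_univ fun _ _ => isOpen_Ioo).inter
      (isOpen_lt continuous_const (continuous_sumFn n))).inter
      (isOpen_lt (continuous_sumFn n) continuous_const))
  have hxU : (fun _ : Fin n => s / n) ∈ U := by
    have hsum : ∑ _i : Fin n, s / n = s := by
      rw [Finset.sum_const, Finset.card_univ, Fintype.card_fin, nsmul_eq_mul]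
      field_simp
    refine ⟨⟨?_, ?_⟩, ?_⟩
    · intro i _
      exact ⟨div_pos hs3 hn', (div_lt_one hn').2 hs4⟩
    · simp only [Set.mem_setOf_eq]; rw [hsum]; exact hs1
    · simp only [Set.mem_setOf_eq]; rw [hsum]; exact hs5
  have hsub : U ⊆ truncCube n b \ truncCube n a := by
    rintro x ⟨⟨hx1, hx2⟩, hx3⟩
    refine ⟨⟨fun i => ?_, le_of_lt hx3⟩, fun hmem => ?_⟩
    · have := hx1 i (Set.mem_univ i)
      exact ⟨le_of_lt this.1, le_of_lt this.2⟩
    · exact absurd hmem.2 (not_le.2 hx2)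
  exact lt_of_lt_of_le (hUopen.measure_pos volume ⟨_, hxU⟩) (measure_mono hsub)

lemma truncVol_strict (n : ℕ) (hn : 0 < n) {a b : ℝ} (ha : 0 ≤ a) (hab : a < b) (hb : b ≤ n) :
    truncVol n a < truncVol n b := by
  have h := diff_pos n hn ha hab hb
  have h2 : 0 < (volume (truncCube n b \ truncCube n a)).toReal :=
    ENNReal.toReal_pos h.ne'
      (ne_top_of_le_ne_top (volume_truncCube_ne_top n b) (measure_mono Set.diff_subset))
  rw [vol_diff n (le_of_lt hab)] at h2
  linarith

lemma truncVol_pos (n : ℕ) (hn : 0 < n) {t : ℝ} (ht : 0 < t) (htn : t ≤ n) :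
    0 < truncVol n t :=
  lt_of_le_of_lt (truncVol_nonneg n 0) (truncVol_strict n hn le_rfl ht htn)

lemma Ifun_at_n (n : ℕ) : Ifun n n = n / 2 := by
  set C : Set (Fin n → ℝ) := truncCube n (n : ℝ) with hC
  have hmp : MeasurePreserving (fun x : Fin n → ℝ => (1 : Fin n → ℝ) - x) volume volume :=
    Measure.measurePreserving_sub_left volume 1
  have hemb : MeasurableEmbedding (fun x : Fin n → ℝ => (1 : Fin n → ℝ) - x) :=
    (MeasurableEquiv.subLeft (1 : Fin n → ℝ)).measurableEmbedding
  have hpre : (fun x : Fin n → ℝ => (1 : Fin n → ℝ) - x) ⁻¹' C = C := by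
    rw [hC, truncCube_at_n]
    ext x
    simp only [Set.mem_preimage, Set.mem_univ_pi, Pi.sub_apply, Pi.one_apply, Set.mem_Icc]
    constructor
    · intro h i; have := h i; constructor <;> linarith [(this).1, (this).2]
    · intro h i; have := h i; constructor <;> linarith [(this).1, (this).2]
  have key : ∫ x in C, (∑ i, ((1 : Fin n → ℝ) - x) i) = ∫ y in C, ∑ i, y i := by
    have := hmp.setIntegral_preimage_emb hemb (fun y => ∑ i, y i) C
    rwa [hpre] at this
  have hCvol : (volume C).toReal = 1 := by
    rw [hC, truncCube_at_n, volume_cube]; simp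
  have hint : IntegrableOn (fun x : Fin n → ℝ => ∑ i, x i) C := integrableOn_sum n n
  have hconst : IntegrableOn (fun _ : Fin n → ℝ => (n:ℝ)) C :=
    integrableOn_const (volume_truncCube_ne_top n n)
  have expand : ∫ x in C, (∑ i, ((1 : Fin n → ℝ) - x) i) =
      ∫ x in C, ((n:ℝ) - ∑ i, x i) := by
    apply setIntegral_congr_fun (measurableSet_truncCube n n)
    intro x _
    simp only [Pi.sub_apply, Pi.one_apply, Finset.sum_sub_distrib]
    congr 1
    simp
  rw [expand] at key
  rw [integral_sub hconst hint, setIntegral_const, measureReal_def, hCvol, one_smul] at key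
  have : Ifun n n = ∫ y in C, ∑ i, y i := rfl
  rw [this]
  linarith [key]

/-- Average first moment of the truncated cube. -/
noncomputable def truncMoment (n : ℕ) (t : ℝ) : ℝ :=
  (1 / (n * truncVol n t)) * ∫ x in truncCube n t, ∑ i, x i

lemma truncMoment_eq (n : ℕ) (t : ℝ) :
    truncMoment n t = Ifun n t / ((n:ℝ) * truncVol n t) := by
  rw [truncMoment, Ifun]; ring

lemma truncVol_at_n (n : ℕ) : truncVol n n = 1 := by
  rw [truncVol, truncCube_at_n, volume_cube]; simp

lemma Ifun_le (n : ℕ) (t : ℝ) : Ifun n t ≤ t * truncVol n t := by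
  rw [Ifun]
  calc ∫ x in truncCube n t, ∑ i, x i ≤ ∫ _x in truncCube n t, t :=
      setIntegral_mono_on (integrableOn_sum n t)
        (integrableOn_const (volume_truncCube_ne_top n t))
        (measurableSet_truncCube n t) (fun x hx => hx.2)
    _ = t * truncVol n t := by rw [setIntegral_const, smul_eq_mul, truncVol, mul_comm]; rfl

lemma Ifun_lt (n : ℕ) (hn : 0 < n) {t : ℝ} (ht : 0 < t) (htn : t ≤ n) :
    Ifun n t < t * truncVol n t := by
  have hconst : IntegrableOn (fun _ : Fin n → ℝ => t) (truncCube n t) :=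
    integrableOn_const (volume_truncCube_ne_top n t)
  have h1 : t * truncVol n t - Ifun n t = ∫ x in truncCube n t, (t - ∑ i, x i) := by
    rw [integral_sub hconst (integrableOn_sum n t), setIntegral_const, smul_eq_mul, Ifun,
      truncVol, mul_comm]; rfl
  have hhalf : truncCube n (t/2) ⊆ truncCube n t := truncCube_mono n (by linarith)
  have hint2 : IntegrableOn (fun x : Fin n → ℝ => t - ∑ i, x i) (truncCube n t) :=
    hconst.sub (integrableOn_sum n t)
  have h2 : ∫ x in truncCube n (t/2), (t - ∑ i, x i) ≤
      ∫ x in truncCube n t, (t - ∑ i, x i) := by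
    refine setIntegral_mono_set hint2 ?_ hhalf.eventuallyLE
    refine (ae_restrict_iff' (measurableSet_truncCube n t)).2 (Filter.Eventually.of_forall ?_)
    intro x hx
    simp only [Pi.zero_apply, sub_nonneg]
    exact hx.2
  have h3 : t/2 * truncVol n (t/2) ≤ ∫ x in truncCube n (t/2), (t - ∑ i, x i) := by
    rw [truncVol]
    refine setIntegral_ge_of_const_le_real (measurableSet_truncCube n (t/2))
      (volume_truncCube_ne_top n (t/2)) (fun x hx => by linarith [hx.2])
      (hint2.mono_set hhalf)
  have h4 : 0 < truncVol n (t/2) := truncVol_pos n hn (by linarith) (by linarith)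
  nlinarith

lemma truncMoment_strict (n : ℕ) (hn : 0 < n) {a b : ℝ} (ha : 0 < a) (hab : a < b)
    (hb : b ≤ n) : truncMoment n a < truncMoment n b := by
  have hn' : (0:ℝ) < n := by exact_mod_cast hn
  have hVa : 0 < truncVol n a := truncVol_pos n hn ha (by linarith)
  have hVb : 0 < truncVol n b := truncVol_pos n hn (by linarith) hb
  have hΔV : truncVol n a < truncVol n b := truncVol_strict n hn ha.le hab hb
  have hlow := Ifun_sub_lower n hab.le
  have hIa_lt : Ifun n a < a * truncVol n a := Ifun_lt n hn ha (by linarith)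
  rw [truncMoment_eq, truncMoment_eq, div_lt_div_iff₀ (by positivity) (by positivity)]
  nlinarith [mul_le_mul_of_nonneg_right hlow hVa.le,
    mul_pos (sub_pos.2 hΔV) (sub_pos.2 hIa_lt)]

lemma continuousAt_truncMoment (m : ℕ) {t : ℝ} (h : truncVol (m+1) t ≠ 0) :
    ContinuousAt (truncMoment (m+1)) t := by
  have heq : truncMoment (m+1) = fun s => Ifun (m+1) s / (((m+1:ℕ):ℝ) * truncVol (m+1) s) :=
    funext (truncMoment_eq (m+1))
  rw [heq]
  exact ContinuousAt.div (continuous_Ifun m).continuousAt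
    (continuous_const.mul (continuous_truncVol m)).continuousAt
    (mul_ne_zero (by positivity) h)

lemma truncMoment_le (n : ℕ) (hn : 0 < n) {t : ℝ} (ht : 0 < t) (htn : t ≤ n) :
    truncMoment n t ≤ t / n := by
  have hn' : (0:ℝ) < n := by exact_mod_cast hn
  have hV : 0 < truncVol n t := truncVol_pos n hn ht htn
  rw [truncMoment_eq, div_le_div_iff₀ (by positivity) hn']
  nlinarith [Ifun_le n t]

lemma truncMoment_at_n (n : ℕ) (hn : 0 < n) : truncMoment n n = 1/2 := by
  have hn' : (0:ℝ) < n := by exact_mod_cast hn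
  rw [truncMoment_eq, Ifun_at_n, truncVol_at_n]
  field_simp

theorem truncMoment_strictMono_and_unique_solution (n : ℕ) (hn : 0 < n) :
    StrictMonoOn (truncMoment n) (Set.Ioo (0 : ℝ) n) ∧
      ∀ α ∈ Set.Ioo (0 : ℝ) (1 / 2),
        ∃! t, t ∈ Set.Ioo (0 : ℝ) (n : ℝ) ∧ truncMoment n t = α := by
  obtain ⟨m, rfl⟩ : ∃ m, n = m + 1 := ⟨n - 1, (Nat.succ_pred_eq_of_pos hn).symm⟩
  have hn' : (0:ℝ) < ((m+1:ℕ):ℝ) := by positivity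
  have hsm : StrictMonoOn (truncMoment (m+1)) (Set.Ioo (0 : ℝ) ((m+1:ℕ):ℝ)) := by
    intro a ha b hb hab
    exact truncMoment_strict (m+1) hn ha.1 hab hb.2.le
  refine ⟨hsm, ?_⟩
  intro α hα
  obtain ⟨hα0, hα2⟩ := hα
  set N : ℝ := ((m+1:ℕ):ℝ) with hN
  -- small point
  set a0 : ℝ := N * α / 2 with ha0
  have ha0pos : 0 < a0 := by positivity
  have ha0lt : a0 < N := by nlinarith
  have hPa0 : truncMoment (m+1) a0 < α := by
    have := truncMoment_le (m+1) hn ha0pos ha0lt.le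
    have h2 : a0 / N = α / 2 := by rw [ha0]; field_simp
    rw [h2] at this
    linarith
  -- point near N with value > α
  have hPN : truncMoment (m+1) (N : ℝ) = 1/2 := truncMoment_at_n (m+1) hn
  have hVN : truncVol (m+1) N ≠ 0 := by rw [hN]; rw [truncVol_at_n]; norm_num
  have hcontN : ContinuousAt (truncMoment (m+1)) N := continuousAt_truncMoment m hVN
  have hmem : (truncMoment (m+1)) ⁻¹' Set.Ioi α ∈ nhds N := by
    apply hcontN
    rw [hPN]
    exact Ioi_mem_nhds (by linarith)
  obtain ⟨δ, hδpos, hball⟩ := Metric.mem_nhds_iff.1 hmem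
  set t1 : ℝ := max (N - δ/2) ((a0 + N)/2) with ht1
  have ht1ltN : t1 < N := by
    apply max_lt <;> [linarith; linarith]
  have ht1gt : a0 < t1 := lt_of_lt_of_le (by linarith) (le_max_right _ _)
  have ht1ball : t1 ∈ Metric.ball N δ := by
    rw [Metric.mem_ball, Real.dist_eq, abs_of_nonpos (by linarith)]
    have : N - δ/2 ≤ t1 := le_max_left _ _
    linarith
  have hPt1 : α < truncMoment (m+1) t1 := hball ht1ball
  -- IVT
  have hcontOn : ContinuousOn (truncMoment (m+1)) (Set.Icc a0 t1) := by
    intro s hs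
    refine (continuousAt_truncMoment m ?_).continuousWithinAt
    exact (truncVol_pos (m+1) hn (lt_of_lt_of_le ha0pos hs.1)
      (le_of_lt (lt_of_le_of_lt hs.2 ht1ltN))).ne'
  have hIVT := intermediate_value_Ioo ht1gt.le hcontOn
  have hαmem : α ∈ Set.Ioo (truncMoment (m+1) a0) (truncMoment (m+1) t1) := ⟨hPa0, hPt1⟩
  obtain ⟨t, htmem, hPt⟩ := hIVT hαmem
  have htIoo : t ∈ Set.Ioo (0:ℝ) N := ⟨lt_trans ha0pos htmem.1, lt_trans htmem.2 ht1ltN⟩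
  refine ⟨t, ⟨htIoo, hPt⟩, ?_⟩
  rintro t' ⟨ht', hPt'⟩
  exact hsm.injOn ht' htIoo (by rw [hPt', hPt])
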